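/- Let R > 0, L > 0, M ∈ ℝ with L + (4/3)M > 0, a² ≥ 0, b² ≥ 0, c² > 0. Then there exists a constant C ∈ ℝ, depending only on a, b, c, L, M, R, such that ℰ(w₀,…,w₄) ≥ C for every w₀,…,w₄ continuously differentiable on (0,R] with all integrals appearing in ℰ finite, with lim_{r→0⁺} w_i(r) = 0 for i = 1,2,3,4, and with boundary values w₀(R) = −s₊/√6, w₁(R) = s₊/√2, w₂(R) = w₃(R) = w₄(R) = 0; i.e., the reduced energy ℰ is bounded below on the admissible set. -/

import Mathlib

open Real MeasureTheory

noncomputable section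

/-- First elastic term of the reduced energy (density against `dr`, including the factor `r`). -/
def d1 (L : ℝ) (w0 w1 : ℝ → ℝ) (r : ℝ) : ℝ :=
  (L/2) * ((deriv w1 r)^2 + (deriv w0 r)^2 + (4/r^2) * (w1 r)^2) * r

/-- Anisotropic elastic term of the reduced energy. -/
def d2 (M : ℝ) (w0 w1 : ℝ → ℝ) (r : ℝ) : ℝ :=
  (M/6) * (Real.sqrt 3 * deriv w1 r - deriv w0 r + (2 * Real.sqrt 3 / r) * w1 r)^2 * r

/-- Elastic term for the components `w₂, w₃`. -/
def d3 (L M : ℝ) (w2 w3 : ℝ → ℝ) (r : ℝ) : ℝ :=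
  ((L + M)/2) * ((deriv w2 r)^2 + (4/r^2) * (w2 r)^2
    + (deriv w3 r)^2 + (1/r^2) * (w3 r)^2) * r

/-- Elastic term for the component `w₄`. -/
def d4 (L : ℝ) (w4 : ℝ → ℝ) (r : ℝ) : ℝ :=
  (L/2) * ((deriv w4 r)^2 + (1/r^2) * (w4 r)^2) * r

/-- `σ = Σ_{i=0}^4 w_i²`. -/
def sig (w0 w1 w2 w3 w4 : ℝ → ℝ) (r : ℝ) : ℝ :=
  (w0 r)^2 + (w1 r)^2 + (w2 r)^2 + (w3 r)^2 + (w4 r)^2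

/-- Quadratic-quartic bulk term of the reduced energy. -/
def d5 (a2 c2 : ℝ) (w0 w1 w2 w3 w4 : ℝ → ℝ) (r : ℝ) : ℝ :=
  (-a2/2 + (c2/4) * sig w0 w1 w2 w3 w4 r) * sig w0 w1 w2 w3 w4 r * r

/-- Cubic bulk term of the reduced energy. -/
def d6 (b2 : ℝ) (w0 w1 w2 w3 w4 : ℝ → ℝ) (r : ℝ) : ℝ :=
  -(Real.sqrt 6 * b2 / 36) *
    (2 * (w0 r)^3 - 6 * w0 r * ((w1 r)^2 + (w2 r)^2)
      + 3 * w0 r * ((w3 r)^2 + (w4 r)^2)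
      + 3 * Real.sqrt 3 * w1 r * ((w3 r)^2 - (w4 r)^2)
      + 6 * Real.sqrt 3 * w2 r * w3 r * w4 r) * r

/-- The reduced Landau–de Gennes radial energy `ℰ(w₀,…,w₄)`. -/
def redE (L M a2 b2 c2 R : ℝ) (w0 w1 w2 w3 w4 : ℝ → ℝ) : ℝ :=
  ∫ r in Set.Ioo (0 : ℝ) R,
    (d1 L w0 w1 r + d2 M w0 w1 r + d3 L M w2 w3 r + d4 L w4 r
      + d5 a2 c2 w0 w1 w2 w3 w4 r + d6 b2 w0 w1 w2 w3 w4 r)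

/-- `s₊ = (b² + √(b⁴ + 24a²c²))/(4c²)`. -/
def sPlus (a2 b2 c2 : ℝ) : ℝ := (b2 + Real.sqrt (b2^2 + 24 * a2 * c2)) / (4 * c2)

end


-- ===================== auxiliary lemmas =====================
section AuxiliaryLemmas

lemma sqrt6_le' : Real.sqrt 6 * 29 ≤ 72 := by
  nlinarith [Real.sq_sqrt (show (0:ℝ) ≤ 6 by norm_num), Real.sqrt_nonneg 6]

lemma sqrt3_le' : Real.sqrt 3 ≤ 2 := by
  nlinarith [Real.sq_sqrt (show (0:ℝ) ≤ 3 by norm_num), Real.sqrt_nonneg 3]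

lemma mul3_le' {a b c m : ℝ} (ha : |a| ≤ m) (hb : |b| ≤ m) (hc : |c| ≤ m) :
    a * b * c ≤ m^3 := by
  have h0a := (abs_nonneg a).trans ha
  have h0b := (abs_nonneg b).trans hb
  calc a * b * c ≤ |a * b * c| := le_abs_self _
    _ = |a| * |b| * |c| := by rw [abs_mul, abs_mul]
    _ ≤ m * m * m := mul_le_mul (mul_le_mul ha hb (abs_nonneg _) h0a) hc (abs_nonneg _)
          (mul_nonneg h0a h0b)
    _ = m^3 := by ring

lemma mul_sq_le' {a s m : ℝ} (ha : |a| ≤ m) (hs : |s| ≤ m^2) : a * s ≤ m^3 := by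
  have h0a := (abs_nonneg a).trans ha
  calc a * s ≤ |a * s| := le_abs_self _
    _ = |a| * |s| := abs_mul _ _
    _ ≤ m * m^2 := mul_le_mul ha hs (abs_nonneg _) h0a
    _ = m^3 := by ring

lemma cubic_le' (w0 w1 w2 w3 w4 m : ℝ) (hm : 0 ≤ m)
    (h0 : |w0| ≤ m) (h1 : |w1| ≤ m) (h2 : |w2| ≤ m) (h3 : |w3| ≤ m) (h4 : |w4| ≤ m)
    (h12 : w1^2 + w2^2 ≤ m^2) (h34 : w3^2 + w4^2 ≤ m^2)
    (h3s : w3^2 ≤ m^2) (h4s : w4^2 ≤ m^2) :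
    2 * w0^3 - 6 * w0 * (w1^2 + w2^2) + 3 * w0 * (w3^2 + w4^2)
      + 3 * Real.sqrt 3 * w1 * (w3^2 - w4^2) + 6 * Real.sqrt 3 * w2 * w3 * w4
      ≤ 29 * m^3 := by
  have hm3 : (0:ℝ) ≤ m^3 := by positivity
  have t1 : w0^3 ≤ m^3 := by nlinarith [mul3_le' h0 h0 h0]
  have t2 : (-w0) * (w1^2 + w2^2) ≤ m^3 := by
    apply mul_sq_le' (by rwa [abs_neg])
    rw [abs_of_nonneg (by positivity)]; exact h12
  have t3 : w0 * (w3^2 + w4^2) ≤ m^3 := by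
    apply mul_sq_le' h0
    rw [abs_of_nonneg (by positivity)]; exact h34
  have t4 : w1 * (w3^2 - w4^2) ≤ m^3 := by
    apply mul_sq_le' h1
    rw [abs_le]; constructor <;> nlinarith [sq_nonneg w3, sq_nonneg w4]
  have t5 : w2 * w3 * w4 ≤ m^3 := mul3_le' h2 h3 h4
  have hq0 : (0:ℝ) ≤ Real.sqrt 3 := Real.sqrt_nonneg 3
  nlinarith [mul_le_mul_of_nonneg_left t4 hq0, mul_le_mul_of_nonneg_left t5 hq0,
    mul_le_mul_of_nonneg_right sqrt3_le' hm3]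

lemma quartic_aux' (a2 b2 c2 m β : ℝ) (hβ : c2 * β = c2*a2/2 + 8*b2^2) :
    0 ≤ c2*((c2/4)*m^4 - 2*b2*m^3 - (a2/2)*m^2) + 2*β^2 := by
  have hβm : c2*β*m^2 = c2*a2/2*m^2 + 8*b2^2*m^2 := by linear_combination m^2 * hβ
  nlinarith [sq_nonneg (c2*m^2 - 8*b2*m), sq_nonneg (c2*m^2 - 4*β), hβm]

lemma quartic_lb' (a2 b2 c2 m : ℝ) (hc : 0 < c2) :
    -(2*(a2/2 + 8*b2^2/c2)^2/c2) ≤ (c2/4)*m^4 - 2*b2*m^3 - (a2/2)*m^2 := by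
  have hβ : c2 * (a2/2 + 8*b2^2/c2) = c2*a2/2 + 8*b2^2 := by field_simp
  have h0 := quartic_aux' a2 b2 c2 m _ hβ
  rw [neg_le, le_div_iff₀ hc]
  linarith

lemma bulk_core' (a2 b2 c2 : ℝ) (hb : 0 ≤ b2) (hc : 0 < c2) (w0 w1 w2 w3 w4 m : ℝ)
    (hm0 : 0 ≤ m) (hm2 : m^2 = w0^2 + w1^2 + w2^2 + w3^2 + w4^2)
    (h0 : |w0| ≤ m) (h1 : |w1| ≤ m) (h2 : |w2| ≤ m) (h3 : |w3| ≤ m) (h4 : |w4| ≤ m) :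
    -(2*(a2/2 + 8*b2^2/c2)^2/c2)
      ≤ (-a2/2 + (c2/4) * (w0^2 + w1^2 + w2^2 + w3^2 + w4^2))
          * (w0^2 + w1^2 + w2^2 + w3^2 + w4^2)
        - (Real.sqrt 6 * b2 / 36) *
          (2 * w0^3 - 6 * w0 * (w1^2 + w2^2) + 3 * w0 * (w3^2 + w4^2)
            + 3 * Real.sqrt 3 * w1 * (w3^2 - w4^2)
            + 6 * Real.sqrt 3 * w2 * w3 * w4) := by
  have h12 : w1^2 + w2^2 ≤ m^2 := by nlinarith [sq_nonneg w0, sq_nonneg w3, sq_nonneg w4]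
  have h34 : w3^2 + w4^2 ≤ m^2 := by nlinarith [sq_nonneg w0, sq_nonneg w1, sq_nonneg w2]
  have h3s : w3^2 ≤ m^2 := by nlinarith [sq_nonneg w0, sq_nonneg w1, sq_nonneg w2, sq_nonneg w4]
  have h4s : w4^2 ≤ m^2 := by nlinarith [sq_nonneg w0, sq_nonneg w1, sq_nonneg w2, sq_nonneg w3]
  have hX := cubic_le' w0 w1 w2 w3 w4 m hm0 h0 h1 h2 h3 h4 h12 h34 h3s h4s
  have hm3 : (0:ℝ) ≤ m^3 := by positivity
  have hc6 : (0:ℝ) ≤ Real.sqrt 6 * b2 / 36 := by positivity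
  have step : (Real.sqrt 6 * b2 / 36) *
      (2 * w0^3 - 6 * w0 * (w1^2 + w2^2) + 3 * w0 * (w3^2 + w4^2)
        + 3 * Real.sqrt 3 * w1 * (w3^2 - w4^2)
        + 6 * Real.sqrt 3 * w2 * w3 * w4) ≤ 2*b2*m^3 := by
    refine le_trans (mul_le_mul_of_nonneg_left hX hc6) ?_
    nlinarith [sqrt6_le', mul_nonneg hb hm3]
  have hq := quartic_lb' a2 b2 c2 m hc
  have hd5 : (-a2/2 + (c2/4) * (w0^2 + w1^2 + w2^2 + w3^2 + w4^2))
      * (w0^2 + w1^2 + w2^2 + w3^2 + w4^2)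
      = (c2/4)*m^4 - (a2/2)*m^2 := by rw [← hm2]; ring
  linarith [hd5.ge]

lemma elastic_core' (L M f s q : ℝ) (hA : 0 < 3*L+M) (hq : q^2 = 3) :
    (3*L*M/(2*(3*L+M))) * s^2 ≤ (L/2)*f^2 + (M/6)*(q*s - f)^2 := by
  have key' : (3*L*f^2 + M*(q*s - f)^2)*(3*L+M) - 9*L*M*s^2
      = ((3*L+M)*f - q*M*s)^2 := by
    linear_combination (3*L*M*s^2) * hq
  have h9 : 9*L*M*s^2 ≤ (3*L*f^2 + M*(q*s - f)^2)*(3*L+M) := by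
    nlinarith [key', sq_nonneg ((3*L+M)*f - q*M*s)]
  rw [div_mul_eq_mul_div, div_le_iff₀ (by linarith : (0:ℝ) < 2*(3*L+M))]
  linarith

lemma elastic_ptwise' (L M r f g y : ℝ) (hr : 0 < r) (hA : 0 < 3*L + M) :
    (L/2 + 3*L*M/(2*(3*L+M)))*((g^2 + 4/r^2*y^2)*r) + 4*(3*L*M/(2*(3*L+M)))*(g*y)
      ≤ (L/2)*(g^2 + f^2 + (4/r^2)*y^2)*r
        + (M/6)*(Real.sqrt 3*g - f + (2*Real.sqrt 3/r)*y)^2*r := by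
  have hq : (Real.sqrt 3)^2 = 3 := Real.sq_sqrt (by norm_num)
  have hrne : r ≠ 0 := hr.ne'
  have hKs := elastic_core' L M f (g + 2*y/r) (Real.sqrt 3) hA hq
  have hKr := mul_le_mul_of_nonneg_right hKs hr.le
  have idA : (M/6)*(Real.sqrt 3*g - f + (2*Real.sqrt 3/r)*y)^2*r
      = (M/6)*(Real.sqrt 3*(g + 2*y/r) - f)^2*r := by ring
  have idB : (3*L*M/(2*(3*L+M)))*((g + 2*y/r)^2)*r
      = (3*L*M/(2*(3*L+M)))*((g^2 + 4/r^2*y^2)*r) + 4*((3*L*M/(2*(3*L+M)))*(g*y)) := by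
    field_simp; ring
  have idC : (L/2)*(g^2 + f^2 + (4/r^2)*y^2)*r
      = (L/2)*((g^2 + 4/r^2*y^2)*r) + (L/2)*f^2*r := by ring
  rw [idA, idC]
  nlinarith [hKr, idB]

lemma abs_le_sqrt_sum' {x S : ℝ} (h : x^2 ≤ S) : |x| ≤ Real.sqrt S := by
  rw [← Real.sqrt_sq_eq_abs]; exact Real.sqrt_le_sqrt h

set_option maxHeartbeats 800000 in
lemma ftc_half_sq (R : ℝ) (hR : 0 < R) (u : ℝ → ℝ)
    (hdiff : ∀ r ∈ Set.Ioc (0:ℝ) R, DifferentiableAt ℝ u r)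
    (hcd : ContinuousOn (deriv u) (Set.Ioc 0 R))
    (huc : ContinuousOn u (Set.Ioc 0 R))
    (hH_int : IntegrableOn (fun r => deriv u r * u r) (Set.Ioo 0 R))
    (hu0 : Filter.Tendsto u (nhdsWithin 0 (Set.Ioi 0)) (nhds 0)) :
    ∫ r in Set.Ioo (0:ℝ) R, deriv u r * u r = (u R)^2/2 := by
  set ε : ℕ → ℝ := fun n => R/(n+2) with hεdef
  have hε_pos : ∀ n, 0 < ε n := fun n => by positivity
  have hε_leR : ∀ n, ε n ≤ R := by
    intro n
    apply div_le_self hR.le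
    have : (0:ℝ) ≤ (n:ℝ) := Nat.cast_nonneg n
    linarith
  have hmono : Monotone (fun n => Set.Ioo (ε n) R) := by
    intro n m hnm
    apply Set.Ioo_subset_Ioo _ le_rfl
    apply div_le_div_of_nonneg_left hR.le (by positivity)
    have : (n:ℝ) ≤ (m:ℝ) := Nat.cast_le.mpr hnm
    linarith
  have hunion : (⋃ n, Set.Ioo (ε n) R) = Set.Ioo (0:ℝ) R := by
    ext x
    simp only [Set.mem_iUnion, Set.mem_Ioo]
    constructor
    · rintro ⟨n, h1, h2⟩; exact ⟨(hε_pos n).trans h1, h2⟩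
    · rintro ⟨hx0, hxR⟩
      obtain ⟨n, hn⟩ := exists_nat_gt (R/x)
      refine ⟨n, ?_, hxR⟩
      show R / ((n:ℝ)+2) < x
      rw [div_lt_iff₀ (by positivity : (0:ℝ) < (n:ℝ)+2)]
      rw [div_lt_iff₀ hx0] at hn
      nlinarith [hx0]
  have htend : Filter.Tendsto (fun n => ∫ x in Set.Ioo (ε n) R, deriv u x * u x)
      Filter.atTop (nhds (∫ x in Set.Ioo (0:ℝ) R, deriv u x * u x)) := by
    have := tendsto_setIntegral_of_monotone (fun n : ℕ => measurableSet_Ioo) hmono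
      (by rw [hunion]; exact hH_int)
    rwa [hunion] at this
  have hval : ∀ n, ∫ x in Set.Ioo (ε n) R, deriv u x * u x
      = (u R)^2/2 - (u (ε n))^2/2 := by
    intro n
    have hsub : Set.uIcc (ε n) R ⊆ Set.Ioc 0 R := by
      rw [Set.uIcc_of_le (hε_leR n)]
      intro x hx
      exact ⟨lt_of_lt_of_le (hε_pos n) hx.1, hx.2⟩
    rw [← integral_Ioc_eq_integral_Ioo, ← intervalIntegral.integral_of_le (hε_leR n)]
    refine intervalIntegral.integral_eq_sub_of_hasDerivAt
      (f := fun r => (u r)^2/2) ?_ ?_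
    · intro x hx
      have hw := (hdiff x (hsub hx)).hasDerivAt
      have h2 : HasDerivAt (fun r => (u r)^2) (2 * u x * deriv u x) x := by
        simpa using hw.fun_pow 2
      have h3 := h2.div_const 2
      rw [show deriv u x * u x = 2 * u x * deriv u x / 2 by ring]
      exact h3
    · exact (((hcd.mono hsub)).mul (huc.mono hsub)).intervalIntegrable
  have hεlim : Filter.Tendsto ε Filter.atTop (nhdsWithin 0 (Set.Ioi 0)) := by
    apply tendsto_nhdsWithin_of_tendsto_nhds_of_eventually_within
    · have h2 : Filter.Tendsto (fun n : ℕ => ((n:ℝ)+2)) Filter.atTop Filter.atTop :=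
        Filter.tendsto_atTop_add_const_right _ 2 tendsto_natCast_atTop_atTop
      exact Filter.Tendsto.div_atTop tendsto_const_nhds h2
    · exact Filter.Eventually.of_forall fun n => hε_pos n
  have hlim2 : Filter.Tendsto (fun n => (u R)^2/2 - (u (ε n))^2/2) Filter.atTop
      (nhds ((u R)^2/2)) := by
    have h1 : Filter.Tendsto (fun n => u (ε n)) Filter.atTop (nhds 0) :=
      hu0.comp hεlim
    have h2 : Filter.Tendsto (fun n => (u (ε n))^2/2) Filter.atTop (nhds 0) := by
      have := ((h1.pow 2).div_const 2)
      simpa using this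
    have := (tendsto_const_nhds (x := (u R)^2/2) (f := (Filter.atTop : Filter ℕ))).sub h2
    simpa using this
  exact tendsto_nhds_unique htend (hlim2.congr (fun n => (hval n).symm))

set_option maxHeartbeats 1000000 in
lemma elastic_int_lb (R L M : ℝ) (hR : 0 < R) (hL : 0 < L) (hA : 0 < 3*L+M)
    (hL2K : 0 ≤ L/2 + 3*L*M/(2*(3*L+M))) (w0 w1 : ℝ → ℝ)
    (hdiff1 : ∀ r ∈ Set.Ioc (0:ℝ) R, DifferentiableAt ℝ w1 r)
    (hcd1 : ContinuousOn (deriv w1) (Set.Ioc 0 R))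
    (hd1i : IntegrableOn (d1 L w0 w1) (Set.Ioo 0 R))
    (hd2i : IntegrableOn (d2 M w0 w1) (Set.Ioo 0 R))
    (hu0 : Filter.Tendsto w1 (nhdsWithin 0 (Set.Ioi 0)) (nhds 0)) :
    2*(3*L*M/(2*(3*L+M)))*(w1 R)^2
      ≤ ∫ r in Set.Ioo (0:ℝ) R, (d1 L w0 w1 r + d2 M w0 w1 r) := by
  have huc : ContinuousOn w1 (Set.Ioc 0 R) :=
    fun x hx => ((hdiff1 x hx).continuousAt).continuousWithinAt
  set K := 3*L*M/(2*(3*L+M)) with hKdef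
  set E : ℝ → ℝ := fun r => ((deriv w1 r)^2 + 4/r^2*(w1 r)^2)*r with hEdef
  set H : ℝ → ℝ := fun r => deriv w1 r * w1 r with hHdef
  have hw1m : AEStronglyMeasurable w1 (volume.restrict (Set.Ioo 0 R)) :=
    ((huc.mono Set.Ioo_subset_Ioc_self)).aestronglyMeasurable measurableSet_Ioo
  have hderivm : AEStronglyMeasurable (deriv w1) (volume.restrict (Set.Ioo 0 R)) :=
    (measurable_deriv w1).aestronglyMeasurable
  have h4r : AEStronglyMeasurable (fun r : ℝ => 4/r^2) (volume.restrict (Set.Ioo 0 R)) := by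
    apply Measurable.aestronglyMeasurable
    fun_prop
  have hEm : AEStronglyMeasurable E (volume.restrict (Set.Ioo 0 R)) := by
    rw [hEdef]
    apply AEStronglyMeasurable.mul _ aestronglyMeasurable_id
    apply AEStronglyMeasurable.add
    · simpa [pow_two] using hderivm.fun_mul hderivm
    · exact h4r.mul (by simpa [pow_two] using hw1m.fun_mul hw1m)
  have hHm : AEStronglyMeasurable H (volume.restrict (Set.Ioo 0 R)) :=
    hderivm.mul hw1m
  have hE0 : ∀ r ∈ Set.Ioo (0:ℝ) R, 0 ≤ E r := by
    intro r hr
    have h1 : (0:ℝ) ≤ 4/r^2 := by positivity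
    have h2 := mul_nonneg h1 (sq_nonneg (w1 r))
    exact mul_nonneg (by nlinarith [sq_nonneg (deriv w1 r)]) hr.1.le
  have hE_int : IntegrableOn E (Set.Ioo 0 R) := by
    apply Integrable.mono' (hd1i.const_mul (2/L)) hEm
    filter_upwards [ae_restrict_mem measurableSet_Ioo] with r hr
    rw [Real.norm_eq_abs, abs_of_nonneg (hE0 r hr)]
    show E r ≤ 2/L * d1 L w0 w1 r
    have hid : 2/L * d1 L w0 w1 r
        = ((deriv w1 r)^2 + (deriv w0 r)^2 + (4/r^2)*(w1 r)^2)*r := by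
      unfold d1; field_simp
    rw [hid, hEdef]
    have h1 : (0:ℝ) ≤ (deriv w0 r)^2 * r := mul_nonneg (sq_nonneg _) hr.1.le
    nlinarith [h1]
  have hH_int : IntegrableOn H (Set.Ioo 0 R) := by
    apply Integrable.mono' hE_int hHm
    filter_upwards [ae_restrict_mem measurableSet_Ioo] with r hr
    rw [Real.norm_eq_abs]
    have hr0 : (0:ℝ) < r := hr.1
    have key : |deriv w1 r * w1 r| * r ≤ E r * r := by
      have hEr : E r * r = (deriv w1 r)^2*r^2 + 4*(w1 r)^2 := by
        rw [hEdef]; field_simp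
      rw [hEr]
      rcases abs_cases (deriv w1 r * w1 r) with ⟨h, _⟩ | ⟨h, _⟩ <;> rw [h] <;>
        nlinarith [sq_nonneg (deriv w1 r * r - 2 * w1 r),
          sq_nonneg (deriv w1 r * r + 2 * w1 r)]
    exact le_of_mul_le_mul_right key hr0
  have hH_val : ∫ r in Set.Ioo (0:ℝ) R, H r = (w1 R)^2/2 :=
    ftc_half_sq R hR w1 hdiff1 hcd1 huc hH_int hu0
  have hptwise : ∀ r ∈ Set.Ioo (0:ℝ) R,
      (L/2 + K)*E r + 4*K*H r ≤ d1 L w0 w1 r + d2 M w0 w1 r := by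
    intro r hr
    have := elastic_ptwise' L M r (deriv w0 r) (deriv w1 r) (w1 r) hr.1 hA
    unfold d1 d2
    rw [hEdef, hHdef, hKdef]
    calc (L/2 + 3*L*M/(2*(3*L+M)))*(((deriv w1 r)^2 + 4/r^2*(w1 r)^2)*r)
          + 4*(3*L*M/(2*(3*L+M)))*(deriv w1 r * w1 r)
        ≤ (L/2)*((deriv w1 r)^2 + (deriv w0 r)^2 + (4/r^2)*(w1 r)^2)*r
          + (M/6)*(Real.sqrt 3*(deriv w1 r) - deriv w0 r
              + (2*Real.sqrt 3/r)*(w1 r))^2*r := this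
      _ = (L/2)*((deriv w1 r)^2 + (deriv w0 r)^2 + (4/r^2)*(w1 r)^2)*r
          + (M/6)*(Real.sqrt 3*(deriv w1 r) - deriv w0 r
              + (2*Real.sqrt 3/r)*(w1 r))^2*r := rfl
  have hG_int : IntegrableOn (fun r => (L/2 + K)*E r + 4*K*H r) (Set.Ioo 0 R) :=
    (hE_int.const_mul _).add (hH_int.const_mul _)
  have hmono := setIntegral_mono_on hG_int (hd1i.add hd2i) measurableSet_Ioo hptwise
  simp only [Pi.add_apply] at hmono
  have hGeq : ∫ r in Set.Ioo (0:ℝ) R, ((L/2 + K)*E r + 4*K*H r)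
      = (L/2 + K)*(∫ r in Set.Ioo (0:ℝ) R, E r) + 4*K*(∫ r in Set.Ioo (0:ℝ) R, H r) := by
    rw [integral_add (hE_int.const_mul _) (hH_int.const_mul _),
      integral_const_mul, integral_const_mul]
  have hIE : 0 ≤ ∫ r in Set.Ioo (0:ℝ) R, E r :=
    setIntegral_nonneg measurableSet_Ioo hE0
  have step : 2*K*(w1 R)^2 ≤ (L/2 + K)*(∫ r in Set.Ioo (0:ℝ) R, E r)
      + 4*K*(∫ r in Set.Ioo (0:ℝ) R, H r) := by
    rw [hH_val]
    nlinarith [mul_nonneg hL2K hIE]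
  calc 2*K*(w1 R)^2 ≤ _ := step
    _ = ∫ r in Set.Ioo (0:ℝ) R, ((L/2 + K)*E r + 4*K*H r) := hGeq.symm
    _ ≤ _ := hmono

set_option maxHeartbeats 1000000 in
/-- pointwise bulk bound, wrapper -/
lemma bulk_ptwise (a2 b2 c2 R : ℝ) (hb : 0 ≤ b2) (hc : 0 < c2) (hR : 0 < R)
    (w0 w1 w2 w3 w4 : ℝ → ℝ) (r : ℝ) (hr : r ∈ Set.Ioo (0:ℝ) R) :
    -(2*(a2/2 + 8*b2^2/c2)^2/c2)*R
      ≤ d5 a2 c2 w0 w1 w2 w3 w4 r + d6 b2 w0 w1 w2 w3 w4 r := by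
  obtain ⟨hr0, hrR⟩ := hr
  have hS0 : (0:ℝ) ≤ (w0 r)^2 + (w1 r)^2 + (w2 r)^2 + (w3 r)^2 + (w4 r)^2 := by positivity
  have hm0 : 0 ≤ Real.sqrt ((w0 r)^2 + (w1 r)^2 + (w2 r)^2 + (w3 r)^2 + (w4 r)^2) :=
    Real.sqrt_nonneg _
  have hm2 : (Real.sqrt ((w0 r)^2 + (w1 r)^2 + (w2 r)^2 + (w3 r)^2 + (w4 r)^2))^2
      = (w0 r)^2 + (w1 r)^2 + (w2 r)^2 + (w3 r)^2 + (w4 r)^2 := Real.sq_sqrt hS0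
  have hcore := bulk_core' a2 b2 c2 hb hc (w0 r) (w1 r) (w2 r) (w3 r) (w4 r) _ hm0 hm2
    (abs_le_sqrt_sum' (by nlinarith [sq_nonneg (w1 r), sq_nonneg (w2 r), sq_nonneg (w3 r), sq_nonneg (w4 r)]))
    (abs_le_sqrt_sum' (by nlinarith [sq_nonneg (w0 r), sq_nonneg (w2 r), sq_nonneg (w3 r), sq_nonneg (w4 r)]))
    (abs_le_sqrt_sum' (by nlinarith [sq_nonneg (w0 r), sq_nonneg (w1 r), sq_nonneg (w3 r), sq_nonneg (w4 r)]))
    (abs_le_sqrt_sum' (by nlinarith [sq_nonneg (w0 r), sq_nonneg (w1 r), sq_nonneg (w2 r), sq_nonneg (w4 r)]))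
    (abs_le_sqrt_sum' (by nlinarith [sq_nonneg (w0 r), sq_nonneg (w1 r), sq_nonneg (w2 r), sq_nonneg (w3 r)]))
  have hsum : d5 a2 c2 w0 w1 w2 w3 w4 r + d6 b2 w0 w1 w2 w3 w4 r
      = ((-a2/2 + (c2/4) * ((w0 r)^2 + (w1 r)^2 + (w2 r)^2 + (w3 r)^2 + (w4 r)^2))
          * ((w0 r)^2 + (w1 r)^2 + (w2 r)^2 + (w3 r)^2 + (w4 r)^2)
        - (Real.sqrt 6 * b2 / 36) *
          (2 * (w0 r)^3 - 6 * w0 r * ((w1 r)^2 + (w2 r)^2)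
            + 3 * w0 r * ((w3 r)^2 + (w4 r)^2)
            + 3 * Real.sqrt 3 * w1 r * ((w3 r)^2 - (w4 r)^2)
            + 6 * Real.sqrt 3 * w2 r * w3 r * w4 r)) * r := by
    unfold d5 d6 sig; ring
  rw [hsum]
  have hK0 : (0:ℝ) ≤ 2*(a2/2 + 8*b2^2/c2)^2/c2 := by positivity
  have step1 := mul_le_mul_of_nonneg_right hcore hr0.le
  have step2 : -(2*(a2/2 + 8*b2^2/c2)^2/c2)*R ≤ -(2*(a2/2 + 8*b2^2/c2)^2/c2)*r :=
    mul_le_mul_of_nonpos_left hrR.le (neg_nonpos.mpr hK0)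
  linarith [step1, step2]

end AuxiliaryLemmas

/-- Under the coercivity conditions `L > 0`, `L + (4/3)M > 0`, the
reduced energy `ℰ` is bounded below on the admissible set, by a constant depending
only on the parameters. -/
theorem reduced_energy_bounded_below
    (R L M a2 b2 c2 : ℝ) (hR : 0 < R) (hL : 0 < L) (hLM : 0 < L + (4/3) * M)
    (ha : 0 ≤ a2) (hb : 0 ≤ b2) (hc : 0 < c2) :
    ∃ C : ℝ, ∀ w : Fin 5 → ℝ → ℝ,
      (∀ i : Fin 5, ∀ r ∈ Set.Ioc (0 : ℝ) R, DifferentiableAt ℝ (w i) r) →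
      (∀ i : Fin 5, ContinuousOn (deriv (w i)) (Set.Ioc 0 R)) →
      IntegrableOn (d1 L (w 0) (w 1)) (Set.Ioo 0 R) →
      IntegrableOn (d2 M (w 0) (w 1)) (Set.Ioo 0 R) →
      IntegrableOn (d3 L M (w 2) (w 3)) (Set.Ioo 0 R) →
      IntegrableOn (d4 L (w 4)) (Set.Ioo 0 R) →
      IntegrableOn (d5 a2 c2 (w 0) (w 1) (w 2) (w 3) (w 4)) (Set.Ioo 0 R) →
      IntegrableOn (d6 b2 (w 0) (w 1) (w 2) (w 3) (w 4)) (Set.Ioo 0 R) →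
      (∀ i : Fin 5, i ≠ 0 →
        Filter.Tendsto (w i) (nhdsWithin 0 (Set.Ioi 0)) (nhds 0)) →
      w 0 R = -(sPlus a2 b2 c2) / Real.sqrt 6 →
      w 1 R = sPlus a2 b2 c2 / Real.sqrt 2 →
      w 2 R = 0 → w 3 R = 0 → w 4 R = 0 →
      C ≤ redE L M a2 b2 c2 R (w 0) (w 1) (w 2) (w 3) (w 4) := by
  refine ⟨3*L*M/(2*(3*L+M)) * (sPlus a2 b2 c2)^2
      + (-(2*(a2/2 + 8*b2^2/c2)^2/c2)*R)*R, ?_⟩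
  intro w hdiff hcd hd1i hd2i hd3i hd4i hd5i hd6i hlim hw0R hw1R hw2R hw3R hw4R
  have hA : (0:ℝ) < 3*L + M := by linarith
  have hLMpos : (0:ℝ) < L + M := by linarith
  have hL2K : 0 ≤ L/2 + 3*L*M/(2*(3*L+M)) := by
    have hid : L/2 + 3*L*M/(2*(3*L+M)) = L*(3*L+4*M)/(2*(3*L+M)) := by
      rw [div_add_div _ _ (by norm_num) (by positivity), div_eq_div_iff (by positivity) (by positivity)]; ring
    rw [hid]
    apply div_nonneg (by nlinarith) (by linarith)
  have hEl := elastic_int_lb R L M hR hL hA hL2K (w 0) (w 1)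
    (hdiff 1) (hcd 1) hd1i hd2i (hlim 1 (by decide))
  have hsq2 : (Real.sqrt 2)^2 = 2 := Real.sq_sqrt (by norm_num)
  have hbv : 2*(3*L*M/(2*(3*L+M)))*(w 1 R)^2
      = 3*L*M/(2*(3*L+M)) * (sPlus a2 b2 c2)^2 := by
    rw [hw1R, div_pow, hsq2]; ring
  have hI3 : 0 ≤ ∫ r in Set.Ioo (0:ℝ) R, d3 L M (w 2) (w 3) r := by
    apply setIntegral_nonneg measurableSet_Ioo
    intro r hr
    unfold d3
    apply mul_nonneg (mul_nonneg (by linarith) (by positivity)) hr.1.le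
  have hI4 : 0 ≤ ∫ r in Set.Ioo (0:ℝ) R, d4 L (w 4) r := by
    apply setIntegral_nonneg measurableSet_Ioo
    intro r hr
    unfold d4
    apply mul_nonneg (mul_nonneg (by linarith) (by positivity)) hr.1.le
  have hI56 : (-(2*(a2/2 + 8*b2^2/c2)^2/c2)*R)*R
      ≤ ∫ r in Set.Ioo (0:ℝ) R, (d5 a2 c2 (w 0) (w 1) (w 2) (w 3) (w 4) r
          + d6 b2 (w 0) (w 1) (w 2) (w 3) (w 4) r) := by
    have hconst : IntegrableOn (fun _ : ℝ => -(2*(a2/2 + 8*b2^2/c2)^2/c2)*R)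
        (Set.Ioo 0 R) := integrableOn_const (by
          rw [Real.volume_Ioo]; exact ENNReal.ofReal_ne_top)
    have hmono := setIntegral_mono_on hconst (hd5i.add hd6i) measurableSet_Ioo
      (fun r hr => by
        simpa using bulk_ptwise a2 b2 c2 R hb hc hR (w 0) (w 1) (w 2) (w 3) (w 4) r hr)
    simp only [Pi.add_apply] at hmono
    calc (-(2*(a2/2 + 8*b2^2/c2)^2/c2)*R)*R
        = (-(2*(a2/2 + 8*b2^2/c2)^2/c2)*R) * (volume (Set.Ioo (0:ℝ) R)).toReal := by
          rw [Real.volume_Ioo, ENNReal.toReal_ofReal (by linarith)]; ring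
      _ = ∫ _ in Set.Ioo (0:ℝ) R, (-(2*(a2/2 + 8*b2^2/c2)^2/c2)*R) := by
          rw [setIntegral_const, smul_eq_mul, measureReal_def]; ring
      _ ≤ _ := hmono
  have h56 : IntegrableOn (fun r => d5 a2 c2 (w 0) (w 1) (w 2) (w 3) (w 4) r
      + d6 b2 (w 0) (w 1) (w 2) (w 3) (w 4) r) (Set.Ioo 0 R) := hd5i.add hd6i
  have h456 : IntegrableOn (fun r => d4 L (w 4) r
      + (d5 a2 c2 (w 0) (w 1) (w 2) (w 3) (w 4) r
        + d6 b2 (w 0) (w 1) (w 2) (w 3) (w 4) r)) (Set.Ioo 0 R) := hd4i.add h56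
  have h3456 : IntegrableOn (fun r => d3 L M (w 2) (w 3) r + (d4 L (w 4) r
      + (d5 a2 c2 (w 0) (w 1) (w 2) (w 3) (w 4) r
        + d6 b2 (w 0) (w 1) (w 2) (w 3) (w 4) r))) (Set.Ioo 0 R) := hd3i.add h456
  have h12 : IntegrableOn (fun r => d1 L (w 0) (w 1) r + d2 M (w 0) (w 1) r)
      (Set.Ioo 0 R) := hd1i.add hd2i
  have hsplit : redE L M a2 b2 c2 R (w 0) (w 1) (w 2) (w 3) (w 4)
      = (∫ r in Set.Ioo (0:ℝ) R, (d1 L (w 0) (w 1) r + d2 M (w 0) (w 1) r))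
        + ((∫ r in Set.Ioo (0:ℝ) R, d3 L M (w 2) (w 3) r)
        + ((∫ r in Set.Ioo (0:ℝ) R, d4 L (w 4) r)
        + (∫ r in Set.Ioo (0:ℝ) R, (d5 a2 c2 (w 0) (w 1) (w 2) (w 3) (w 4) r
            + d6 b2 (w 0) (w 1) (w 2) (w 3) (w 4) r)))) := by
    rw [← integral_add hd4i h56, ← integral_add hd3i h456, ← integral_add h12 h3456]
    unfold redE
    congr 1
    funext r
    ring
  rw [hsplit]
  linarith [hEl, hI3, hI4, hI56, hbv.ge, hbv.le]
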